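/- Two matrices A, B in SL₂(ℂ) have a common eigenvector (i.e., the representation of the free group F₂ sending the generators to A and B is reducible) if and only if tr(A)² + tr(B)² + tr(AB)² − tr(A)·tr(B)·tr(AB) − 4 = 0, equivalently tr(ABA⁻¹B⁻¹) = 2. -/

import Mathlib

open Matrix

private lemma sq_exists (z : ℂ) : ∃ s : ℂ, s ^ 2 = z :=
  IsAlgClosed.exists_pow_nat_eq z (n := 2) (by norm_num)

/-- If the leading coefficient `c` is nonzero and the resultant vanishes, the two
binary quadratics have a common nontrivial zero. -/
private lemma res_aux (c e b r f q : ℂ) (hc : c ≠ 0)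
    (hres : (c * q - b * r) ^ 2 - (c * f - e * r) * (e * q - b * f) = 0) :
    ∃ x y : ℂ, ¬(x = 0 ∧ y = 0) ∧
      c * x ^ 2 + e * (x * y) + b * y ^ 2 = 0 ∧
      r * x ^ 2 + f * (x * y) + q * y ^ 2 = 0 := by
  obtain ⟨σ, hσ⟩ := sq_exists (e ^ 2 - 4 * c * b)
  have h2c : (2 : ℂ) * c ≠ 0 := by simp [hc]
  have hf1 : c * (-e + σ) ^ 2 + e * ((-e + σ) * (2 * c)) + b * (2 * c) ^ 2 = 0 := by
    linear_combination c * hσ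
  have hf2 : c * (-e - σ) ^ 2 + e * ((-e - σ) * (2 * c)) + b * (2 * c) ^ 2 = 0 := by
    linear_combination c * hσ
  have key : (r * (-e + σ) ^ 2 + f * ((-e + σ) * (2 * c)) + q * (2 * c) ^ 2) *
      (r * (-e - σ) ^ 2 + f * ((-e - σ) * (2 * c)) + q * (2 * c) ^ 2) =
      16 * c ^ 2 * ((c * q - b * r) ^ 2 - (c * f - e * r) * (e * q - b * f)) := by
    linear_combination (r ^ 2 * σ ^ 2 - e ^ 2 * r ^ 2 - 4 * c * b * r ^ 2
      + 4 * c * e * r * f - 4 * c ^ 2 * f ^ 2 + 8 * c ^ 2 * r * q) * hσ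
  rw [hres, mul_zero] at key
  rcases mul_eq_zero.mp key with hg | hg
  · exact ⟨-e + σ, 2 * c, fun h => h2c h.2, hf1, hg⟩
  · exact ⟨-e - σ, 2 * c, fun h => h2c h.2, hf2, hg⟩

/-- Two binary quadratics over ℂ with vanishing resultant have a common nontrivial zero. -/
private lemma common_root (c e b r f q : ℂ)
    (hres : (c * q - b * r) ^ 2 - (c * f - e * r) * (e * q - b * f) = 0) :
    ∃ x y : ℂ, ¬(x = 0 ∧ y = 0) ∧
      c * x ^ 2 + e * (x * y) + b * y ^ 2 = 0 ∧
      r * x ^ 2 + f * (x * y) + q * y ^ 2 = 0 := by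
  by_cases hc : c = 0
  · by_cases hr : r = 0
    · exact ⟨1, 0, by simp, by rw [hc]; ring, by rw [hr]; ring⟩
    · obtain ⟨x, y, hxy, h1, h2⟩ := res_aux r f q c e b hr (by linear_combination hres)
      exact ⟨x, y, hxy, h2, h1⟩
  · exact res_aux c e b r f q hc hres

/-- A nonzero vector `![x,y]` with vanishing eigenvector-quadratic is an eigenvector. -/
private lemma eig_of_quad (M : Matrix (Fin 2) (Fin 2) ℂ) (x y : ℂ)
    (h : M 1 0 * x ^ 2 + (M 1 1 - M 0 0) * (x * y) - M 0 1 * y ^ 2 = 0) :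
    ∃ a : ℂ, M.mulVec ![x, y] = a • ![x, y] := by
  by_cases hx : x = 0
  · subst hx
    by_cases hy : y = 0
    · exact ⟨0, by subst hy; funext i; fin_cases i <;>
        simp [Matrix.mulVec, dotProduct, Fin.sum_univ_two]⟩
    · have hM : M 0 1 = 0 := by
        have h' : M 0 1 * y ^ 2 = 0 := by linear_combination -h
        rcases mul_eq_zero.mp h' with h'' | h''
        · exact h''
        · exact absurd (pow_eq_zero_iff (by norm_num) |>.mp h'') hy
      refine ⟨M 1 1, ?_⟩
      funext i; fin_cases i <;>
        simp [Matrix.mulVec, dotProduct, Fin.sum_univ_two, hM, mul_comm]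
  · refine ⟨(M 0 0 * x + M 0 1 * y) / x, ?_⟩
    funext i; fin_cases i <;>
      simp only [Matrix.mulVec, dotProduct, Fin.sum_univ_two, Pi.smul_apply,
        Matrix.cons_val_zero, Matrix.cons_val_one, Matrix.head_cons, smul_eq_mul,
        Fin.isValue, Fin.zero_eta, Fin.mk_one]
    · field_simp
    · field_simp
      linear_combination h

theorem reducible_iff_fricke (A B : Matrix.SpecialLinearGroup (Fin 2) ℂ) :
    ((∃ v : Fin 2 → ℂ, v ≠ 0 ∧ ∃ a b : ℂ,
        (A : Matrix (Fin 2) (Fin 2) ℂ).mulVec v = a • v ∧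
        (B : Matrix (Fin 2) (Fin 2) ℂ).mulVec v = b • v) ↔
      (Matrix.trace (A : Matrix (Fin 2) (Fin 2) ℂ)) ^ 2 +
        (Matrix.trace (B : Matrix (Fin 2) (Fin 2) ℂ)) ^ 2 +
        (Matrix.trace ((A * B : Matrix.SpecialLinearGroup (Fin 2) ℂ) :
            Matrix (Fin 2) (Fin 2) ℂ)) ^ 2 -
        Matrix.trace (A : Matrix (Fin 2) (Fin 2) ℂ) *
          Matrix.trace (B : Matrix (Fin 2) (Fin 2) ℂ) *
          Matrix.trace ((A * B : Matrix.SpecialLinearGroup (Fin 2) ℂ) :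
            Matrix (Fin 2) (Fin 2) ℂ) - 4 = 0) ∧
    ((Matrix.trace (A : Matrix (Fin 2) (Fin 2) ℂ)) ^ 2 +
        (Matrix.trace (B : Matrix (Fin 2) (Fin 2) ℂ)) ^ 2 +
        (Matrix.trace ((A * B : Matrix.SpecialLinearGroup (Fin 2) ℂ) :
            Matrix (Fin 2) (Fin 2) ℂ)) ^ 2 -
        Matrix.trace (A : Matrix (Fin 2) (Fin 2) ℂ) *
          Matrix.trace (B : Matrix (Fin 2) (Fin 2) ℂ) *
          Matrix.trace ((A * B : Matrix.SpecialLinearGroup (Fin 2) ℂ) :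
            Matrix (Fin 2) (Fin 2) ℂ) - 4 = 0 ↔
      Matrix.trace ((A * B * A⁻¹ * B⁻¹ : Matrix.SpecialLinearGroup (Fin 2) ℂ) :
          Matrix (Fin 2) (Fin 2) ℂ) = 2) := by
  set M : Matrix (Fin 2) (Fin 2) ℂ := (A : Matrix (Fin 2) (Fin 2) ℂ) with hM
  set N : Matrix (Fin 2) (Fin 2) ℂ := (B : Matrix (Fin 2) (Fin 2) ℂ) with hN
  have hMdet : M 0 0 * M 1 1 - M 0 1 * M 1 0 = 1 := by
    have := A.prop; rwa [Matrix.det_fin_two] at this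
  have hNdet : N 0 0 * N 1 1 - N 0 1 * N 1 0 = 1 := by
    have := B.prop; rwa [Matrix.det_fin_two] at this
  have htrA : Matrix.trace M = M 0 0 + M 1 1 := Matrix.trace_fin_two M
  have htrB : Matrix.trace N = N 0 0 + N 1 1 := Matrix.trace_fin_two N
  have htrAB : Matrix.trace ((A * B : Matrix.SpecialLinearGroup (Fin 2) ℂ) :
      Matrix (Fin 2) (Fin 2) ℂ) =
      M 0 0 * N 0 0 + M 0 1 * N 1 0 + (M 1 0 * N 0 1 + M 1 1 * N 1 1) := by
    rw [show ((A * B : Matrix.SpecialLinearGroup (Fin 2) ℂ) :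
      Matrix (Fin 2) (Fin 2) ℂ) = M * N from rfl, Matrix.trace_fin_two]
    simp [Matrix.mul_apply, Fin.sum_univ_two]
  have htrC : Matrix.trace ((A * B * A⁻¹ * B⁻¹ : Matrix.SpecialLinearGroup (Fin 2) ℂ) :
      Matrix (Fin 2) (Fin 2) ℂ) =
      Matrix.trace (M * N * (adjugate M) * (adjugate N)) := by
    rw [show ((A * B * A⁻¹ * B⁻¹ : Matrix.SpecialLinearGroup (Fin 2) ℂ) :
      Matrix (Fin 2) (Fin 2) ℂ) = M * N * ((A⁻¹ : Matrix.SpecialLinearGroup (Fin 2) ℂ) :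
        Matrix (Fin 2) (Fin 2) ℂ) * ((B⁻¹ : Matrix.SpecialLinearGroup (Fin 2) ℂ) :
        Matrix (Fin 2) (Fin 2) ℂ) from rfl]
    rw [Matrix.SpecialLinearGroup.coe_inv, Matrix.SpecialLinearGroup.coe_inv, ← hM, ← hN]
  have htrC2 : Matrix.trace (M * N * (adjugate M) * (adjugate N)) =
      -(M 1 1 * M 1 1 * N 0 1 * N 1 0) + M 1 0 * M 1 1 * N 0 1 * N 1 1
      - M 1 0 * M 1 1 * N 0 0 * N 0 1 + M 1 0 * M 1 0 * N 0 1 * N 0 1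
      + M 0 1 * M 1 1 * N 1 0 * N 1 1 - M 0 1 * M 1 1 * N 0 0 * N 1 0
      - M 0 1 * M 1 0 * N 1 1 * N 1 1 - M 0 1 * M 1 0 * N 0 0 * N 0 0
      + M 0 1 * M 0 1 * N 1 0 * N 1 0 + 2 * M 0 0 * M 1 1 * N 0 0 * N 1 1
      - M 0 0 * M 1 0 * N 0 1 * N 1 1 + M 0 0 * M 1 0 * N 0 0 * N 0 1
      - M 0 0 * M 0 1 * N 1 0 * N 1 1 + M 0 0 * M 0 1 * N 0 0 * N 1 0
      - M 0 0 * M 0 0 * N 0 1 * N 1 0 := by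
    rw [Matrix.trace_fin_two]
    simp [Matrix.mul_apply, Fin.sum_univ_two, Matrix.adjugate_fin_two]
    ring
  rw [htrA, htrB, htrAB, htrC, htrC2]
  refine ⟨⟨?_, ?_⟩, ?_, ?_⟩
  · rintro ⟨v, hv, a, b, hA, hB⟩
    have hva : ¬ (v 0 = 0 ∧ v 1 = 0) := by
      rintro ⟨h0, h1⟩
      apply hv
      funext i; fin_cases i <;> simp [h0, h1]
    have h0A : M 0 0 * v 0 + M 0 1 * v 1 = a * v 0 := by
      have := congrFun hA 0
      simpa [Matrix.mulVec, dotProduct, Fin.sum_univ_two] using this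
    have h1A : M 1 0 * v 0 + M 1 1 * v 1 = a * v 1 := by
      have := congrFun hA 1
      simpa [Matrix.mulVec, dotProduct, Fin.sum_univ_two] using this
    have h0B : N 0 0 * v 0 + N 0 1 * v 1 = b * v 0 := by
      have := congrFun hB 0
      simpa [Matrix.mulVec, dotProduct, Fin.sum_univ_two] using this
    have h1B : N 1 0 * v 0 + N 1 1 * v 1 = b * v 1 := by
      have := congrFun hB 1
      simpa [Matrix.mulVec, dotProduct, Fin.sum_univ_two] using this
    have hchA : a ^ 2 - (M 0 0 + M 1 1) * a + 1 = 0 := by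
      rcases (not_and_or.mp hva) with h | h
      · have h00 : (a ^ 2 - (M 0 0 + M 1 1) * a + 1) * v 0 = 0 := by
          linear_combination (M 1 1 - a) * h0A - M 0 1 * h1A - (v 0) * hMdet
        rcases mul_eq_zero.mp h00 with h' | h'
        · exact h'
        · exact absurd h' h
      · have h11 : (a ^ 2 - (M 0 0 + M 1 1) * a + 1) * v 1 = 0 := by
          linear_combination (M 0 0 - a) * h1A - M 1 0 * h0A - (v 1) * hMdet
        rcases mul_eq_zero.mp h11 with h' | h'
        · exact h'
        · exact absurd h' h
    have hchB : b ^ 2 - (N 0 0 + N 1 1) * b + 1 = 0 := by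
      rcases (not_and_or.mp hva) with h | h
      · have h00 : (b ^ 2 - (N 0 0 + N 1 1) * b + 1) * v 0 = 0 := by
          linear_combination (N 1 1 - b) * h0B - N 0 1 * h1B - (v 0) * hNdet
        rcases mul_eq_zero.mp h00 with h' | h'
        · exact h'
        · exact absurd h' h
      · have h11 : (b ^ 2 - (N 0 0 + N 1 1) * b + 1) * v 1 = 0 := by
          linear_combination (N 0 0 - b) * h1B - N 1 0 * h0B - (v 1) * hNdet
        rcases mul_eq_zero.mp h11 with h' | h'
        · exact h'
        · exact absurd h' h
    have hdAB : (M 0 0 * N 0 0 + M 0 1 * N 1 0) *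
        (M 1 0 * N 0 1 + M 1 1 * N 1 1) -
        (M 0 0 * N 0 1 + M 0 1 * N 1 1) * (M 1 0 * N 0 0 + M 1 1 * N 1 0) = 1 := by
      linear_combination (N 0 0 * N 1 1 - N 0 1 * N 1 0) * hMdet + hNdet
    have h0AB : (M 0 0 * N 0 0 + M 0 1 * N 1 0) * v 0 +
        (M 0 0 * N 0 1 + M 0 1 * N 1 1) * v 1 = (a * b) * v 0 := by
      linear_combination M 0 0 * h0B + M 0 1 * h1B + b * h0A
    have h1AB : (M 1 0 * N 0 0 + M 1 1 * N 1 0) * v 0 +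
        (M 1 0 * N 0 1 + M 1 1 * N 1 1) * v 1 = (a * b) * v 1 := by
      linear_combination M 1 0 * h0B + M 1 1 * h1B + b * h1A
    have hchAB : (a * b) ^ 2 -
        (M 0 0 * N 0 0 + M 0 1 * N 1 0 + (M 1 0 * N 0 1 + M 1 1 * N 1 1)) * (a * b)
        + 1 = 0 := by
      rcases (not_and_or.mp hva) with h | h
      · have h00 : ((a * b) ^ 2 -
            (M 0 0 * N 0 0 + M 0 1 * N 1 0 + (M 1 0 * N 0 1 + M 1 1 * N 1 1)) * (a * b)
            + 1) * v 0 = 0 := by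
          linear_combination ((M 1 0 * N 0 1 + M 1 1 * N 1 1) - a * b) * h0AB -
            (M 0 0 * N 0 1 + M 0 1 * N 1 1) * h1AB - (v 0) * hdAB
        rcases mul_eq_zero.mp h00 with h' | h'
        · exact h'
        · exact absurd h' h
      · have h11 : ((a * b) ^ 2 -
            (M 0 0 * N 0 0 + M 0 1 * N 1 0 + (M 1 0 * N 0 1 + M 1 1 * N 1 1)) * (a * b)
            + 1) * v 1 = 0 := by
          linear_combination ((M 0 0 * N 0 0 + M 0 1 * N 1 0) - a * b) * h1AB -
            (M 1 0 * N 0 0 + M 1 1 * N 1 0) * h0AB - (v 1) * hdAB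
        rcases mul_eq_zero.mp h11 with h' | h'
        · exact h'
        · exact absurd h' h
    have ha : a ≠ 0 := by
      intro h; rw [h] at hchA; simp at hchA
    have hb : b ≠ 0 := by
      intro h; rw [h] at hchB; simp at hchB
    have hab : a ^ 2 * b ^ 2 ≠ 0 := by
      simp [ha, hb]
    have key : ((M 0 0 + M 1 1) ^ 2 + (N 0 0 + N 1 1) ^ 2 +
        (M 0 0 * N 0 0 + M 0 1 * N 1 0 + (M 1 0 * N 0 1 + M 1 1 * N 1 1)) ^ 2 -
        (M 0 0 + M 1 1) * (N 0 0 + N 1 1) *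
        (M 0 0 * N 0 0 + M 0 1 * N 1 0 + (M 1 0 * N 0 1 + M 1 1 * N 1 1)) - 4) *
        (a ^ 2 * b ^ 2) = 0 := by
      linear_combination
        (-(b ^ 2 + a ^ 2 * b ^ 2 - (N 0 0 + N 1 1) * b
          - (N 0 0 + N 1 1) * a ^ 2 * b ^ 3 + (M 0 0 + M 1 1) * a * b ^ 2)) * hchA +
        (-(-1 - a ^ 4 * b ^ 2 + (N 0 0 + N 1 1) * a ^ 2 * b)) * hchB +
        (-(1 + a ^ 2 * b ^ 2 +
          (M 0 0 * N 0 0 + M 0 1 * N 1 0 + (M 1 0 * N 0 1 + M 1 1 * N 1 1)) * a * b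
          - (M 0 0 + M 1 1) * (N 0 0 + N 1 1) * a * b)) * hchAB
    rcases mul_eq_zero.mp key with h | h
    · exact h
    · exact absurd h hab
  · intro hF
    have hres : (M 1 0 * (-(N 0 1)) - (-(M 0 1)) * N 1 0) ^ 2 -
        (M 1 0 * (N 1 1 - N 0 0) - (M 1 1 - M 0 0) * N 1 0) *
        ((M 1 1 - M 0 0) * (-(N 0 1)) - (-(M 0 1)) * (N 1 1 - N 0 0)) = 0 := by
      linear_combination hF -
        (2 - N 1 1 ^ 2 - 2 * (N 0 1 * N 1 0) - N 0 0 ^ 2) * hMdet -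
        (2 - M 1 1 ^ 2 - 2 * (M 0 1 * M 1 0) - M 0 0 ^ 2) * hNdet
    obtain ⟨x, y, hxy, h1, h2⟩ := common_root (M 1 0) (M 1 1 - M 0 0) (-(M 0 1))
      (N 1 0) (N 1 1 - N 0 0) (-(N 0 1)) hres
    obtain ⟨a, haa⟩ := eig_of_quad M x y (by linear_combination h1)
    obtain ⟨b, hbb⟩ := eig_of_quad N x y (by linear_combination h2)
    refine ⟨![x, y], ?_, a, b, haa, hbb⟩
    intro h
    exact hxy ⟨by simpa using congrFun h 0, by simpa using congrFun h 1⟩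
  · intro hF
    linear_combination hF +
      (N 0 0 ^ 2 + 2 * (N 0 0 * N 1 1) + N 1 1 ^ 2 - 2) * hMdet +
      (M 0 0 ^ 2 + 2 * (M 0 1 * M 1 0) + M 1 1 ^ 2) * hNdet
  · intro hC
    linear_combination hC -
      (N 0 0 ^ 2 + 2 * (N 0 0 * N 1 1) + N 1 1 ^ 2 - 2) * hMdet -
      (M 0 0 ^ 2 + 2 * (M 0 1 * M 1 0) + M 1 1 ^ 2) * hNdet
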